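/- Let φ₁, φ₂ : ℤ(p^∞) → ℂ be bounded, |s| < 1, and suppose there exists κ < ∞ and v₀ such that |Υ_s^{φ₁}(x) − Υ_s^{φ₁}(y)| ≥ e^{−κ}|s|^{v(x−y)} whenever v(x−y) ≥ v₀. Then for all x ≠ y with v(x−y) sufficiently large, | |Υ_s^{φ₁}(x)−Υ_s^{φ₁}(y)| − |Υ_s^{φ₂}(x)−Υ_s^{φ₂}(y)| | ≤ (2/(1−|s|)) ‖φ₁−φ₂‖_∞ · |s|^{v(x−y)}, where ‖φ₁−φ₂‖_∞ = sup_{q ∈ ℤ(p^∞)} |φ₁(q) − φ₂(q)|. -/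

import Mathlib

/-- Lemma 2: comparison of the distance functions of `Υ_s^{φ₁}` and
`Υ_s^{φ₂}` in terms of `‖φ₁ − φ₂‖_∞` over `ℤ(p^∞)`. -/
theorem stmt_18 (p : ℕ) [Fact p.Prime]
    (frac : ℚ_[p] → ℚ)
    (hfrac : ∀ x : ℚ_[p], (0 ≤ frac x ∧ frac x < 1) ∧ ‖x - (frac x : ℚ_[p])‖ ≤ 1 ∧
      ∃ l k : ℕ, frac x = (l : ℚ) / (p : ℚ) ^ k)
    (φ₁ φ₂ : ℚ → ℂ)
    (hb₁ : ∃ M : ℝ, ∀ q : ℚ, ‖φ₁ q‖ ≤ M) (hb₂ : ∃ M : ℝ, ∀ q : ℚ, ‖φ₂ q‖ ≤ M)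
    (s : ℂ) (hs0 : 0 < ‖s‖) (hs1 : ‖s‖ < 1)
    (Υ₁ Υ₂ : ℚ_[p] → ℂ) (hΥ₁0 : Υ₁ 0 = 0) (hΥ₂0 : Υ₂ 0 = 0)
    (hΥ₁ : ∀ x : ℚ_[p], x ≠ 0 → Υ₁ x = ∑' k : ℕ,
      φ₁ (frac (x / (p : ℚ_[p]) ^ (x.valuation + (k : ℤ) + 1))) * s ^ (x.valuation + (k : ℤ)))
    (hΥ₂ : ∀ x : ℚ_[p], x ≠ 0 → Υ₂ x = ∑' k : ℕ,
      φ₂ (frac (x / (p : ℚ_[p]) ^ (x.valuation + (k : ℤ) + 1))) * s ^ (x.valuation + (k : ℤ)))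
    (κ : ℝ) (v₀ : ℤ)
    (hlow : ∀ x y : ℚ_[p], x ≠ y → v₀ ≤ (x - y).valuation →
      Real.exp (-κ) * ‖s‖ ^ ((x - y).valuation) ≤ ‖Υ₁ x - Υ₁ y‖)
    (E : ℝ)
    (hE : E = sSup {r : ℝ | ∃ l k : ℕ, l < p ^ k ∧
      r = ‖φ₁ ((l : ℚ) / (p : ℚ) ^ k) - φ₂ ((l : ℚ) / (p : ℚ) ^ k)‖}) :
    ∃ V : ℤ, ∀ x y : ℚ_[p], x ≠ y → V ≤ (x - y).valuation →
      |‖Υ₁ x - Υ₁ y‖ - ‖Υ₂ x - Υ₂ y‖| ≤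
        2 / (1 - ‖s‖) * E * ‖s‖ ^ ((x - y).valuation) := by
  obtain ⟨M₁, hM₁⟩ := hb₁
  obtain ⟨M₂, hM₂⟩ := hb₂
  have hp1 : (1:ℝ) < (p:ℝ) := by exact_mod_cast (Fact.out : p.Prime).one_lt
  have hsne : s ≠ 0 := norm_pos_iff.mp hs0
  have h1s : (0:ℝ) < 1 - ‖s‖ := by linarith
  -- E is an upper bound for each ‖φ₁ (frac z) - φ₂ (frac z)‖
  have hbdd : BddAbove {r : ℝ | ∃ l k : ℕ, l < p ^ k ∧
      r = ‖φ₁ ((l : ℚ) / (p : ℚ) ^ k) - φ₂ ((l : ℚ) / (p : ℚ) ^ k)‖} := by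
    refine ⟨M₁ + M₂, ?_⟩
    rintro r ⟨l, k, -, rfl⟩
    exact (norm_sub_le _ _).trans (add_le_add (hM₁ _) (hM₂ _))
  have hδE : ∀ z : ℚ_[p], ‖φ₁ (frac z) - φ₂ (frac z)‖ ≤ E := by
    intro z
    obtain ⟨⟨h0, h1⟩, -, l, k, hlk⟩ := hfrac z
    rw [hE]
    apply le_csSup hbdd
    refine ⟨l, k, ?_, by rw [hlk]⟩
    have hpk : (0:ℚ) < (p:ℚ) ^ k :=
      pow_pos (by exact_mod_cast (Fact.out : p.Prime).pos) k
    rw [hlk, div_lt_one hpk] at h1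
    exact_mod_cast h1
  have hE0 : (0:ℝ) ≤ E := le_trans (norm_nonneg _) (hδE 0)
  -- summability helper
  have hsum : ∀ (c : ℕ → ℂ) (B : ℝ), (∀ k, ‖c k‖ ≤ B) → ∀ t : ℤ,
      Summable (fun k : ℕ => c k * s ^ (t + (k : ℤ))) := by
    intro c B hc t
    apply Summable.of_norm_bounded (g := fun k : ℕ => (B * ‖s‖ ^ t) * ‖s‖ ^ k)
    · exact (summable_geometric_of_lt_one (norm_nonneg s) hs1).mul_left _
    · intro k
      rw [norm_mul, zpow_add₀ hsne, zpow_natCast, norm_mul, norm_zpow, norm_pow]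
      have h1 : (0:ℝ) < ‖s‖ ^ t := zpow_pos hs0 t
      calc ‖c k‖ * (‖s‖ ^ t * ‖s‖ ^ k) ≤ B * (‖s‖ ^ t * ‖s‖ ^ k) := by
            apply mul_le_mul_of_nonneg_right (hc k); positivity
        _ = B * ‖s‖ ^ t * ‖s‖ ^ k := by ring
  -- norm bound helper
  have hbound : ∀ (c : ℕ → ℂ) (B : ℝ), (∀ k, ‖c k‖ ≤ B) → ∀ t : ℤ,
      ‖∑' k : ℕ, c k * s ^ (t + (k : ℤ))‖ ≤ B / (1 - ‖s‖) * ‖s‖ ^ t := by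
    intro c B hc t
    have h1 : (0:ℝ) < ‖s‖ ^ t := zpow_pos hs0 t
    have hgeo : Summable (fun k : ℕ => (B * ‖s‖ ^ t) * ‖s‖ ^ k) :=
      (summable_geometric_of_lt_one (norm_nonneg s) hs1).mul_left _
    have hle : ∀ k : ℕ, ‖c k * s ^ (t + (k : ℤ))‖ ≤ (B * ‖s‖ ^ t) * ‖s‖ ^ k := by
      intro k
      rw [norm_mul, zpow_add₀ hsne, zpow_natCast, norm_mul, norm_zpow, norm_pow]
      calc ‖c k‖ * (‖s‖ ^ t * ‖s‖ ^ k) ≤ B * (‖s‖ ^ t * ‖s‖ ^ k) := by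
            apply mul_le_mul_of_nonneg_right (hc k); positivity
        _ = B * ‖s‖ ^ t * ‖s‖ ^ k := by ring
    have hnsum : Summable (fun k : ℕ => ‖c k * s ^ (t + (k : ℤ))‖) :=
      Summable.of_nonneg_of_le (fun k => norm_nonneg _) hle hgeo
    calc ‖∑' k : ℕ, c k * s ^ (t + (k : ℤ))‖ ≤ ∑' k : ℕ, ‖c k * s ^ (t + (k : ℤ))‖ :=
          norm_tsum_le_tsum_norm hnsum
      _ ≤ ∑' k : ℕ, (B * ‖s‖ ^ t) * ‖s‖ ^ k := Summable.tsum_le_tsum hle hnsum hgeo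
      _ = (B * ‖s‖ ^ t) * (1 - ‖s‖)⁻¹ := by
          rw [tsum_mul_left, tsum_geometric_of_lt_one (norm_nonneg s) hs1]
      _ = B / (1 - ‖s‖) * ‖s‖ ^ t := by ring
  -- frac is constant on unit-ball cosets
  have hfe : ∀ a b : ℚ_[p], ‖a - b‖ ≤ 1 → frac a = frac b := by
    intro a b hab
    obtain ⟨⟨ha0, ha1⟩, hna, l, k, hl⟩ := hfrac a
    obtain ⟨⟨hb0, hb1⟩, hnb, l', k', hl'⟩ := hfrac b
    have hq1 : ‖((frac a - frac b : ℚ) : ℚ_[p])‖ ≤ 1 := by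
      have heq : ((frac a - frac b : ℚ) : ℚ_[p]) =
          ((frac a : ℚ_[p]) - a) + ((a - b) + (b - (frac b : ℚ_[p]))) := by
        push_cast; ring
      rw [heq]
      refine le_trans (Padic.nonarchimedean _ _) (max_le ?_
        (le_trans (Padic.nonarchimedean _ _) (max_le hab hnb)))
      rw [norm_sub_rev]; exact hna
    have hpQ : ((p:ℚ)) ≠ 0 := by
      exact_mod_cast (Fact.out : p.Prime).ne_zero
    have hN : (frac a - frac b) * (p:ℚ) ^ (k + k') =
        (((l : ℤ) * (p:ℤ) ^ k' - (l' : ℤ) * (p:ℤ) ^ k : ℤ) : ℚ) := by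
      rw [hl, hl']
      push_cast
      field_simp
      ring
    have hcast : ((((l : ℤ) * (p:ℤ) ^ k' - (l' : ℤ) * (p:ℤ) ^ k : ℤ)) : ℚ_[p]) =
        ((frac a - frac b : ℚ) : ℚ_[p]) * (p : ℚ_[p]) ^ (k + k') := by
      rw [show ((p : ℚ_[p]) ^ (k+k')) = (((p:ℚ) ^ (k+k') : ℚ) : ℚ_[p]) by push_cast; ring,
        ← Rat.cast_mul, hN]
      norm_cast
    have hnorm : ‖((((l : ℤ) * (p:ℤ) ^ k' - (l' : ℤ) * (p:ℤ) ^ k : ℤ)) : ℚ_[p])‖ ≤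
        (p:ℝ) ^ (-(k + k') : ℤ) := by
      rw [hcast, norm_mul, Padic.norm_p_pow]
      calc ‖((frac a - frac b : ℚ) : ℚ_[p])‖ * (p:ℝ) ^ (-(k+k') : ℤ)
          ≤ 1 * (p:ℝ) ^ (-(k+k') : ℤ) := by
            apply mul_le_mul_of_nonneg_right hq1
            positivity
        _ = (p:ℝ) ^ (-(k+k') : ℤ) := one_mul _
    obtain ⟨t, ht⟩ := (Padic.norm_int_le_pow_iff_dvd _ _).mp hnorm
    have hqt : frac a - frac b = (t : ℚ) := by
      have hpk0 : ((p:ℚ)) ^ (k + k') ≠ 0 := pow_ne_zero _ hpQ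
      apply mul_right_cancel₀ hpk0
      rw [hN, ht]
      push_cast
      ring
    have hqlt : |frac a - frac b| < 1 := abs_lt.mpr ⟨by linarith, by linarith⟩
    have ht0 : t = 0 := by
      by_contra h
      have h1 : (1:ℚ) ≤ |(t:ℚ)| := by exact_mod_cast Int.one_le_abs (by omega)
      rw [hqt] at hqlt
      linarith
    have : frac a - frac b = 0 := by rw [hqt, ht0]; norm_num
    linarith
  -- valuation comparison helpers
  have hvle : ∀ a b : ℚ_[p], a ≠ 0 → b ≠ 0 → ‖a‖ ≤ ‖b‖ → b.valuation ≤ a.valuation := by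
    intro a b ha hb hab
    rw [Padic.norm_eq_zpow_neg_valuation ha, Padic.norm_eq_zpow_neg_valuation hb,
      zpow_le_zpow_iff_right₀ hp1, neg_le_neg_iff] at hab
    exact hab
  -- difference representation
  have hD : ∀ z : ℚ_[p], z ≠ 0 → Υ₁ z - Υ₂ z = ∑' k : ℕ,
      (φ₁ (frac (z / (p : ℚ_[p]) ^ (z.valuation + (k : ℤ) + 1))) -
       φ₂ (frac (z / (p : ℚ_[p]) ^ (z.valuation + (k : ℤ) + 1)))) * s ^ (z.valuation + (k : ℤ)) := by
    intro z hz
    rw [hΥ₁ z hz, hΥ₂ z hz,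
      ← Summable.tsum_sub (hsum _ M₁ (fun k => hM₁ _) _) (hsum _ M₂ (fun k => hM₂ _) _)]
    exact tsum_congr fun k => (sub_mul _ _ _).symm
  -- trivial bound
  have htriv : ∀ z : ℚ_[p], z ≠ 0 →
      ‖Υ₁ z - Υ₂ z‖ ≤ E / (1 - ‖s‖) * ‖s‖ ^ z.valuation := by
    intro z hz
    rw [hD z hz]
    exact hbound _ E (fun k => hδE _) _
  refine ⟨v₀, fun x y hxy hV => ?_⟩
  set v : ℤ := (x - y).valuation with hv
  have hxysub : x - y ≠ 0 := sub_ne_zero.mpr hxy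
  have hP : (0:ℝ) < ‖s‖ ^ v := zpow_pos hs0 v
  have habs : |‖Υ₁ x - Υ₁ y‖ - ‖Υ₂ x - Υ₂ y‖| ≤ ‖(Υ₁ x - Υ₂ x) - (Υ₁ y - Υ₂ y)‖ := by
    have := abs_norm_sub_norm_le (Υ₁ x - Υ₁ y) (Υ₂ x - Υ₂ y)
    have heq : (Υ₁ x - Υ₁ y) - (Υ₂ x - Υ₂ y) = (Υ₁ x - Υ₂ x) - (Υ₁ y - Υ₂ y) := by ring
    rwa [heq] at this
  refine habs.trans ?_
  -- frac-equality for small indices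
  have hfr : ∀ n : ℤ, n + 1 ≤ v →
      frac (x / (p : ℚ_[p]) ^ (n + 1)) = frac (y / (p : ℚ_[p]) ^ (n + 1)) := by
    intro n hn
    apply hfe
    have heq : x / (p : ℚ_[p]) ^ (n+1) - y / (p : ℚ_[p]) ^ (n+1) =
        (x - y) / (p : ℚ_[p]) ^ (n+1) := by ring
    rw [heq, norm_div, Padic.norm_eq_zpow_neg_valuation hxysub, Padic.norm_p_zpow,
      ← zpow_sub₀ (by positivity : (p:ℝ) ≠ 0)]
    calc (p:ℝ) ^ (-v - -(n+1)) ≤ (p:ℝ) ^ (0:ℤ) := by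
          apply zpow_le_zpow_right₀ hp1.le
          omega
      _ = 1 := zpow_zero _
  by_cases hx0 : x = 0
  · -- x = 0
    subst hx0
    have hy0 : y ≠ 0 := fun h => hxy (h ▸ rfl)
    have hvy : y.valuation = v := by
      apply le_antisymm
      · exact hvle _ _ hxysub hy0 (by rw [zero_sub, norm_neg])
      · exact hvle _ _ hy0 hxysub (by rw [zero_sub, norm_neg])
    have h1 : ‖(Υ₁ 0 - Υ₂ 0) - (Υ₁ y - Υ₂ y)‖ = ‖Υ₁ y - Υ₂ y‖ := by
      rw [hΥ₁0, hΥ₂0, show (0:ℂ) - 0 - (Υ₁ y - Υ₂ y) = -(Υ₁ y - Υ₂ y) by ring, norm_neg]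
    rw [h1]
    calc ‖Υ₁ y - Υ₂ y‖ ≤ E / (1 - ‖s‖) * ‖s‖ ^ y.valuation := htriv y hy0
      _ = E / (1 - ‖s‖) * ‖s‖ ^ v := by rw [hvy]
      _ ≤ 2 / (1 - ‖s‖) * E * ‖s‖ ^ v := by
          have : (0:ℝ) ≤ E / (1 - ‖s‖) * ‖s‖ ^ v := by positivity
          have h2 : E / (1 - ‖s‖) * ‖s‖ ^ v ≤ 2 * (E / (1 - ‖s‖) * ‖s‖ ^ v) := by linarith
          calc E / (1 - ‖s‖) * ‖s‖ ^ v ≤ 2 * (E / (1 - ‖s‖) * ‖s‖ ^ v) := h2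
            _ = 2 / (1 - ‖s‖) * E * ‖s‖ ^ v := by ring
  by_cases hy0 : y = 0
  · subst hy0
    have hvx : x.valuation = v := by
      apply le_antisymm
      · exact hvle _ _ hxysub hx0 (by rw [sub_zero])
      · exact hvle _ _ hx0 hxysub (by rw [sub_zero])
    have h1 : ‖(Υ₁ x - Υ₂ x) - (Υ₁ 0 - Υ₂ 0)‖ = ‖Υ₁ x - Υ₂ x‖ := by
      rw [hΥ₁0, hΥ₂0, show Υ₁ x - Υ₂ x - ((0:ℂ) - 0) = Υ₁ x - Υ₂ x by ring]
    rw [h1]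
    calc ‖Υ₁ x - Υ₂ x‖ ≤ E / (1 - ‖s‖) * ‖s‖ ^ x.valuation := htriv x hx0
      _ = E / (1 - ‖s‖) * ‖s‖ ^ v := by rw [hvx]
      _ ≤ 2 / (1 - ‖s‖) * E * ‖s‖ ^ v := by
          have : (0:ℝ) ≤ E / (1 - ‖s‖) * ‖s‖ ^ v := by positivity
          have h2 : E / (1 - ‖s‖) * ‖s‖ ^ v ≤ 2 * (E / (1 - ‖s‖) * ‖s‖ ^ v) := by linarith
          calc E / (1 - ‖s‖) * ‖s‖ ^ v ≤ 2 * (E / (1 - ‖s‖) * ‖s‖ ^ v) := h2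
            _ = 2 / (1 - ‖s‖) * E * ‖s‖ ^ v := by ring
  -- both nonzero
  by_cases hvv : x.valuation = y.valuation
  · -- equal valuations : cancellation of the initial segment
    have hmv : x.valuation ≤ v := by
      apply hvle _ _ hxysub hx0
      have h2 : ‖x - y‖ ≤ max ‖x‖ ‖y‖ := by
        have h3 := Padic.nonarchimedean x (-y)
        rwa [norm_neg, ← sub_eq_add_neg] at h3
      have h3 : ‖y‖ = ‖x‖ := by
        rw [Padic.norm_eq_zpow_neg_valuation hx0, Padic.norm_eq_zpow_neg_valuation hy0, hvv]
      calc ‖x - y‖ ≤ max ‖x‖ ‖y‖ := h2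
        _ = ‖x‖ := by rw [h3, max_self]
    obtain ⟨t₀, ht₀⟩ : ∃ t₀ : ℕ, v = x.valuation + (t₀ : ℤ) :=
      ⟨(v - x.valuation).toNat, by omega⟩
    obtain ⟨c, hc⟩ : ∃ c : ℕ → ℂ, ∀ k : ℕ, c k =
        (φ₁ (frac (x / (p : ℚ_[p]) ^ (x.valuation + (k : ℤ) + 1))) -
          φ₂ (frac (x / (p : ℚ_[p]) ^ (x.valuation + (k : ℤ) + 1)))) -
        (φ₁ (frac (y / (p : ℚ_[p]) ^ (x.valuation + (k : ℤ) + 1))) -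
          φ₂ (frac (y / (p : ℚ_[p]) ^ (x.valuation + (k : ℤ) + 1)))) := ⟨_, fun k => rfl⟩
    have hcbound : ∀ k, ‖c k‖ ≤ 2 * E := by
      intro k
      rw [hc]
      calc ‖_ - _‖ ≤ ‖_‖ + ‖_‖ := norm_sub_le _ _
        _ ≤ E + E := add_le_add (hδE _) (hδE _)
        _ = 2 * E := by ring
    have hczero : ∀ k : ℕ, k < t₀ → c k = 0 := by
      intro k hk
      rw [hc, hfr (x.valuation + (k : ℤ)) (by omega), sub_self]
    have hdiff : (Υ₁ x - Υ₂ x) - (Υ₁ y - Υ₂ y) =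
        ∑' k : ℕ, c k * s ^ (x.valuation + (k : ℤ)) := by
      rw [hD x hx0, hD y hy0, ← hvv,
        ← Summable.tsum_sub
          (hsum (fun k : ℕ => φ₁ (frac (x / (p : ℚ_[p]) ^ (x.valuation + (k : ℤ) + 1))) -
              φ₂ (frac (x / (p : ℚ_[p]) ^ (x.valuation + (k : ℤ) + 1)))) (M₁ + M₂)
            (fun k => (norm_sub_le _ _).trans (add_le_add (hM₁ _) (hM₂ _))) x.valuation)
          (hsum (fun k : ℕ => φ₁ (frac (y / (p : ℚ_[p]) ^ (x.valuation + (k : ℤ) + 1))) -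
              φ₂ (frac (y / (p : ℚ_[p]) ^ (x.valuation + (k : ℤ) + 1)))) (M₁ + M₂)
            (fun k => (norm_sub_le _ _).trans (add_le_add (hM₁ _) (hM₂ _))) x.valuation)]
      exact tsum_congr fun k => by rw [hc]; ring
    rw [hdiff]
    have hshift : ∑' k : ℕ, c k * s ^ (x.valuation + (k : ℤ)) =
        ∑' j : ℕ, c (t₀ + j) * s ^ (x.valuation + ((t₀ + j : ℕ) : ℤ)) := by
      symm
      apply Function.Injective.tsum_eq (g := fun j : ℕ => t₀ + j)
        (f := fun k : ℕ => c k * s ^ (x.valuation + (k : ℤ)))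
      · exact add_right_injective t₀
      · intro k hk
        rcases le_or_gt t₀ k with h | h
        · refine ⟨k - t₀, ?_⟩
          show t₀ + (k - t₀) = k
          omega
        · exfalso
          apply hk
          show c k * s ^ (x.valuation + (k : ℤ)) = 0
          rw [hczero k h, zero_mul]
    rw [hshift]
    have heq2 : (∑' j : ℕ, c (t₀ + j) * s ^ (x.valuation + ((t₀ + j : ℕ) : ℤ))) =
        ∑' j : ℕ, c (t₀ + j) * s ^ (v + (j : ℤ)) := by
      refine tsum_congr fun j => ?_
      congr 1
      rw [ht₀]
      push_cast
      ring
    rw [heq2]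
    calc ‖∑' j : ℕ, c (t₀ + j) * s ^ (v + (j : ℤ))‖ ≤ (2 * E) / (1 - ‖s‖) * ‖s‖ ^ v :=
          hbound (fun j => c (t₀ + j)) (2 * E) (fun j => hcbound _) v
      _ = 2 / (1 - ‖s‖) * E * ‖s‖ ^ v := by ring
  · -- different valuations: v = min, trivial bounds suffice
    have hnne : ‖x‖ ≠ ‖y‖ := by
      intro h
      apply hvv
      exact le_antisymm (hvle _ _ hy0 hx0 h.ge) (hvle _ _ hx0 hy0 h.le)
    have hmax : ‖x - y‖ = max ‖x‖ ‖y‖ := by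
      have h1 : ‖x + -y‖ = max ‖x‖ ‖-y‖ := Padic.add_eq_max_of_ne (by rwa [norm_neg])
      rwa [← sub_eq_add_neg, norm_neg] at h1
    have hvx : v ≤ x.valuation := hvle _ _ hx0 hxysub (by rw [hmax]; exact le_max_left _ _)
    have hvy : v ≤ y.valuation := hvle _ _ hy0 hxysub (by rw [hmax]; exact le_max_right _ _)
    have hmonox : ‖s‖ ^ x.valuation ≤ ‖s‖ ^ v :=
      zpow_le_zpow_right_of_le_one₀ hs0 hs1.le hvx
    have hmonoy : ‖s‖ ^ y.valuation ≤ ‖s‖ ^ v :=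
      zpow_le_zpow_right_of_le_one₀ hs0 hs1.le hvy
    have hEdiv : (0:ℝ) ≤ E / (1 - ‖s‖) := by positivity
    calc ‖(Υ₁ x - Υ₂ x) - (Υ₁ y - Υ₂ y)‖ ≤ ‖Υ₁ x - Υ₂ x‖ + ‖Υ₁ y - Υ₂ y‖ := norm_sub_le _ _
      _ ≤ E / (1 - ‖s‖) * ‖s‖ ^ x.valuation + E / (1 - ‖s‖) * ‖s‖ ^ y.valuation :=
          add_le_add (htriv x hx0) (htriv y hy0)
      _ ≤ E / (1 - ‖s‖) * ‖s‖ ^ v + E / (1 - ‖s‖) * ‖s‖ ^ v :=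
          add_le_add (mul_le_mul_of_nonneg_left hmonox hEdiv)
            (mul_le_mul_of_nonneg_left hmonoy hEdiv)
      _ = 2 / (1 - ‖s‖) * E * ‖s‖ ^ v := by ring
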